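/- Let g ≥ 1, M := g(g+1)/2, and fix the pair-enumeration k ↦ (𝔣₁(k),𝔣₂(k)) of {1,…,M} onto {(i,j) : 1 ≤ i ≤ j ≤ g}. Then for every g×g complex matrix C and all vectors u, w ∈ ℂ^g: ( Σ_{i,j=1}^g u_i C_{ij} w_j )² = Σ_{k,l=1}^M (2 − δ_{𝔣₁(k)𝔣₂(k)}) · uu_k · (CC)_{kl} · ww_l. -/

import Mathlib

/-- The list of pairs `(i,j)`, `0 ≤ i ≤ j < g` (0-based), in the order
`(1,1),…,(g,g),(1,2),…,(1,g),(2,3),…,(2,g),…,(g-1,g)` of the paper. -/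
def pairList (g : ℕ) : List (ℕ × ℕ) :=
  ((List.range g).map fun i => (i, i)) ++
    (List.range g).flatMap fun i =>
      ((List.range g).filter fun j => i < j).map fun j => (i, j)

/-- The pair-enumeration `k ↦ (𝔣₁(k), 𝔣₂(k))` of `{0,…,M-1}`, `M = g(g+1)/2`,
onto the pairs `(i,j)` with `0 ≤ i ≤ j < g`, as a pair of elements of `Fin g`. -/
def pfin (g : ℕ) (hg : 0 < g) (k : ℕ) : Fin g × Fin g :=
  (⟨((pairList g).getD k (0, 0)).1 % g, Nat.mod_lt _ hg⟩,
   ⟨((pairList g).getD k (0, 0)).2 % g, Nat.mod_lt _ hg⟩)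

/-- The doubled-index construction
`(AA)_{kl} = (A_{𝔣₁(k)𝔣₁(l)} A_{𝔣₂(k)𝔣₂(l)} + A_{𝔣₁(k)𝔣₂(l)} A_{𝔣₂(k)𝔣₁(l)}) / (1 + δ_{𝔣₁(l)𝔣₂(l)})`. -/
noncomputable def ddMat {g : ℕ} (hg : 0 < g) (A : Matrix (Fin g) (Fin g) ℂ)
    (k l : ℕ) : ℂ :=
  (A (pfin g hg k).1 (pfin g hg l).1 * A (pfin g hg k).2 (pfin g hg l).2 +
      A (pfin g hg k).1 (pfin g hg l).2 * A (pfin g hg k).2 (pfin g hg l).1) /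
    (1 + if (pfin g hg l).1 = (pfin g hg l).2 then (1 : ℂ) else 0)

lemma mem_pairList {g : ℕ} {p : ℕ × ℕ} : p ∈ pairList g ↔ p.1 ≤ p.2 ∧ p.2 < g := by
  rcases p with ⟨a, b⟩
  simp only [pairList, List.mem_append, List.mem_map, List.mem_flatMap, List.mem_filter,
    List.mem_range, Prod.mk.injEq, decide_eq_true_eq]
  constructor
  · rintro (⟨i, hi, rfl, rfl⟩ | ⟨i, hi, j, ⟨hj, hij⟩, rfl, rfl⟩) <;> omega
  · rintro ⟨hab, hb⟩
    rcases eq_or_lt_of_le hab with rfl | h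
    · exact Or.inl ⟨a, hb, rfl, rfl⟩
    · exact Or.inr ⟨a, by omega, b, ⟨hb, h⟩, rfl, rfl⟩

lemma filter_range_eq (g i : ℕ) (hi : i < g) :
    ((List.range g).filter fun j => i < j) = (List.range (g - (i+1))).map fun x => (i+1) + x := by
  have h : g = (i+1) + (g - (i+1)) := by omega
  rw [h, List.range_add, List.filter_append]
  have h1 : (List.range (i+1)).filter (fun j => decide (i < j)) = [] := by
    apply List.filter_eq_nil_iff.2
    intro a ha
    simp only [List.mem_range] at ha
    simp only [decide_eq_true_eq]
    omega
  have h2 : ((List.range (g - (i+1))).map fun x => (i+1) + x).filter (fun j => decide (i < j))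
      = (List.range (g - (i+1))).map fun x => (i+1) + x := by
    apply List.filter_eq_self.2
    intro a ha
    simp only [List.mem_map, List.mem_range] at ha
    obtain ⟨x, _, rfl⟩ := ha
    simp only [decide_eq_true_eq]
    omega
  rw [h1, h2]
  simp [h.symm]

lemma length_pairList (g : ℕ) : (pairList g).length = g * (g + 1) / 2 := by
  simp only [pairList, List.length_append, List.length_map, List.length_range,
    List.length_flatMap]
  have h1 : (List.map (List.length ∘ fun i => ((List.range g).filter fun j => i < j).map
      fun j => (i, j)) (List.range g)).sum = ∑ i ∈ Finset.range g, (g - (i+1)) := by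
    rw [show (∑ i ∈ Finset.range g, (g - (i+1))) = ((List.range g).map fun i => g - (i+1)).sum
      from rfl]
    congr 1
    apply List.map_congr_left
    intro i hi
    simp only [List.mem_range] at hi
    simp [filter_range_eq g i hi]
  rw [show (List.map (fun a => (List.filter (fun j => decide (a < j)) (List.range g)).length)
      (List.range g)).sum = ∑ i ∈ Finset.range g, (g - (i+1))
    from (congrArg List.sum (List.map_congr_left (fun i _ => by simp))).trans h1]
  have h2 : (∑ i ∈ Finset.range g, (g - (i+1))) = ∑ i ∈ Finset.range g, i := by
    rw [← Finset.sum_range_reflect]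
    apply Finset.sum_congr rfl
    intro i hi
    simp only [Finset.mem_range] at hi
    omega
  rw [h2]
  set s := ∑ i ∈ Finset.range g, i with hs
  have key : (g + s) * 2 = g * (g + 1) := by
    rcases g with _ | n
    · simp [hs]
    · have h3 := Finset.sum_range_id_mul_two (n + 1)
      simp only [Nat.succ_sub_one] at h3
      rw [hs]
      nlinarith [h3]
  omega

lemma nodup_pairList (g : ℕ) : (pairList g).Nodup := by
  unfold pairList
  apply List.Nodup.append
  · exact (@List.nodup_range g).map (fun a b h => (Prod.mk.injEq _ _ _ _ ▸ h).1)
  · apply List.nodup_flatMap.2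
    refine ⟨fun i _ => ((@List.nodup_range g).filter _).map
      (fun a b h => (Prod.mk.injEq _ _ _ _ ▸ h).2), ?_⟩
    apply List.Pairwise.imp ?_ (@List.pairwise_lt_range g)
    intro a b hab
    intro p hp hq
    simp only [List.mem_map, List.mem_filter, List.mem_range] at hp hq
    obtain ⟨j, _, rfl⟩ := hp
    obtain ⟨j', _, h⟩ := hq
    exact absurd (congrArg Prod.fst h) (by simp; omega)
  · intro p hp hq
    simp only [List.mem_map, List.mem_range, List.mem_flatMap, List.mem_filter,
      decide_eq_true_eq] at hp hq
    obtain ⟨i, _, rfl⟩ := hp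
    obtain ⟨a, _, j, ⟨_, hj⟩, h⟩ := hq
    have h1 := congrArg Prod.fst h
    have h2 := congrArg Prod.snd h
    simp at h1 h2
    omega

lemma sum_range_getD {α M : Type*} [AddCommMonoid M] (l : List α) (d : α) (f : α → M) :
    ∑ k ∈ Finset.range l.length, f (l.getD k d) = (l.map f).sum := by
  induction l with
  | nil => simp
  | cons a t ih =>
    rw [List.length_cons, Finset.sum_range_succ']
    simp only [List.getD_cons_succ, List.getD_cons_zero, ih, List.map_cons, List.sum_cons]
    exact add_comm _ _

lemma sum_pfin {g : ℕ} (hg : 0 < g) (f : Fin g × Fin g → ℂ) :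
    ∑ k ∈ Finset.range (g * (g + 1) / 2), f (pfin g hg k)
      = ∑ p ∈ Finset.univ.filter (fun p : Fin g × Fin g => p.1 ≤ p.2), f p := by
  set toFin : ℕ × ℕ → Fin g × Fin g :=
    fun p => (⟨p.1 % g, Nat.mod_lt _ hg⟩, ⟨p.2 % g, Nat.mod_lt _ hg⟩) with htoFin
  have hpf : ∀ k, pfin g hg k = toFin ((pairList g).getD k (0, 0)) := fun k => rfl
  have h1 : ∑ k ∈ Finset.range (g * (g + 1) / 2), f (pfin g hg k)
      = ((pairList g).map (f ∘ toFin)).sum := by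
    rw [← length_pairList, ← sum_range_getD (pairList g) (0,0) (f ∘ toFin)]
    exact Finset.sum_congr rfl fun k _ => congrArg f (hpf k)
  rw [h1, ← List.map_map]
  set l' := (pairList g).map toFin with hl'
  have hnd : l'.Nodup := by
    apply (nodup_pairList g).map_on
    intro p hp q hq h
    have hp' := mem_pairList.1 hp
    have hq' := mem_pairList.1 hq
    have e1 : p.1 % g = q.1 % g := congrArg Fin.val (congrArg Prod.fst h)
    have e2 : p.2 % g = q.2 % g := congrArg Fin.val (congrArg Prod.snd h)
    rw [Nat.mod_eq_of_lt (by omega), Nat.mod_eq_of_lt (by omega)] at e1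
    rw [Nat.mod_eq_of_lt hp'.2, Nat.mod_eq_of_lt hq'.2] at e2
    exact Prod.ext e1 e2
  have hfs : l'.toFinset = Finset.univ.filter (fun p : Fin g × Fin g => p.1 ≤ p.2) := by
    ext q
    simp only [List.mem_toFinset, Finset.mem_filter, Finset.mem_univ, true_and, hl',
      List.mem_map]
    constructor
    · rintro ⟨p, hp, rfl⟩
      have hp' := mem_pairList.1 hp
      simp only [htoFin, Fin.mk_le_mk]
      calc p.1 % g ≤ p.1 := Nat.mod_le _ _
        _ ≤ p.2 := hp'.1
        _ = p.2 % g := (Nat.mod_eq_of_lt hp'.2).symm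
    · intro hq
      refine ⟨(q.1.val, q.2.val), mem_pairList.2 ⟨hq, q.2.isLt⟩, ?_⟩
      simp [htoFin, Nat.mod_eq_of_lt q.1.isLt, Nat.mod_eq_of_lt q.2.isLt]
  rw [← hfs, List.sum_toFinset f hnd]

lemma sum_sym {g : ℕ} (H : Fin g × Fin g → ℂ) :
    ∑ p ∈ Finset.univ.filter (fun p : Fin g × Fin g => p.1 ≤ p.2),
        (H p + H p.swap) / (1 + if p.1 = p.2 then (1 : ℂ) else 0) = ∑ p, H p := by
  rw [← Finset.sum_filter_add_sum_filter_not Finset.univ (fun p : Fin g × Fin g => p.1 ≤ p.2) H]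
  have hswap : ∑ p ∈ Finset.univ.filter (fun p : Fin g × Fin g => ¬ p.1 ≤ p.2), H p
      = ∑ p ∈ Finset.univ.filter (fun p : Fin g × Fin g => p.1 < p.2), H p.swap := by
    apply Finset.sum_nbij' Prod.swap Prod.swap
    · intro a ha; simp only [Finset.mem_filter, Finset.mem_univ, true_and, not_le] at ha ⊢
      exact ha
    · intro a ha; simp only [Finset.mem_filter, Finset.mem_univ, true_and, not_le] at ha ⊢
      exact ha
    · intro a _; simp
    · intro a _; simp
    · intro a _; simp
  rw [hswap]
  rw [← Finset.sum_filter_add_sum_filter_not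
    (Finset.univ.filter (fun p : Fin g × Fin g => p.1 ≤ p.2)) (fun p => p.1 = p.2)]
  rw [← Finset.sum_filter_add_sum_filter_not
    (Finset.univ.filter (fun p : Fin g × Fin g => p.1 ≤ p.2)) (fun p => p.1 = p.2) H]
  rw [Finset.filter_filter, Finset.filter_filter]
  have hd : (Finset.univ.filter fun p : Fin g × Fin g => p.1 ≤ p.2 ∧ ¬ p.1 = p.2)
      = Finset.univ.filter fun p : Fin g × Fin g => p.1 < p.2 := by
    apply Finset.filter_congr; intro p _
    simp only [lt_iff_le_and_ne, ne_eq, eq_iff_iff]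
  rw [hd, add_assoc]
  congr 1
  · apply Finset.sum_congr rfl
    intro p hp
    simp only [Finset.mem_filter, Finset.mem_univ, true_and] at hp
    have hps : p.swap = p := by
      rcases p with ⟨a, b⟩
      simp only [Prod.swap_prod_mk, Prod.mk.injEq]
      exact ⟨hp.2.symm, hp.2⟩
    rw [hps, if_pos hp.2]
    rw [div_eq_iff (by norm_num : (1 : ℂ) + 1 ≠ 0)]
    ring
  · rw [← Finset.sum_add_distrib]
    apply Finset.sum_congr rfl
    intro p hp
    simp only [Finset.mem_filter, Finset.mem_univ, true_and] at hp
    rw [if_neg (ne_of_lt hp)]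
    ring

/-- The key identity of **Theorem 5.4** (square of the Bergman kernel):
`(∑_{i,j} u_i C_{ij} w_j)² = ∑_{k,l} (2 - δ_{𝔣₁(k)𝔣₂(k)}) uu_k (CC)_{kl} ww_l`. -/
theorem bilinear_square_pair_indices (g : ℕ) (hg : 0 < g)
    (C : Matrix (Fin g) (Fin g) ℂ) (u w : Fin g → ℂ) :
    (∑ i, ∑ j, u i * C i j * w j) ^ 2 =
      ∑ k ∈ Finset.range (g * (g + 1) / 2), ∑ l ∈ Finset.range (g * (g + 1) / 2),
        (2 - if (pfin g hg k).1 = (pfin g hg k).2 then (1 : ℂ) else 0) *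
          (u (pfin g hg k).1 * u (pfin g hg k).2) * ddMat hg C k l *
          (w (pfin g hg l).1 * w (pfin g hg l).2) := by
  classical
  set F : (Fin g × Fin g) → (Fin g × Fin g) → ℂ := fun p q =>
    (2 - if p.1 = p.2 then (1 : ℂ) else 0) * (u p.1 * u p.2) *
      ((C p.1 q.1 * C p.2 q.2 + C p.1 q.2 * C p.2 q.1) /
        (1 + if q.1 = q.2 then (1 : ℂ) else 0)) * (w q.1 * w q.2) with hF
  set G : (Fin g × Fin g) → (Fin g × Fin g) → ℂ := fun p q =>
    u p.1 * C p.1 q.1 * w q.1 * (u p.2 * C p.2 q.2 * w q.2) with hG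
  -- Step 1: rewrite the RHS double sum over pair-index lists as a sum over P × P.
  have step1 : (∑ k ∈ Finset.range (g * (g + 1) / 2), ∑ l ∈ Finset.range (g * (g + 1) / 2),
      (2 - if (pfin g hg k).1 = (pfin g hg k).2 then (1 : ℂ) else 0) *
        (u (pfin g hg k).1 * u (pfin g hg k).2) * ddMat hg C k l *
        (w (pfin g hg l).1 * w (pfin g hg l).2))
      = ∑ p ∈ Finset.univ.filter (fun p : Fin g × Fin g => p.1 ≤ p.2),
          ∑ q ∈ Finset.univ.filter (fun p : Fin g × Fin g => p.1 ≤ p.2), F p q := by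
    rw [← sum_pfin hg (fun p => ∑ q ∈ Finset.univ.filter
      (fun p : Fin g × Fin g => p.1 ≤ p.2), F p q)]
    apply Finset.sum_congr rfl
    intro k _
    rw [← sum_pfin hg (F (pfin g hg k))]
    apply Finset.sum_congr rfl
    intro l _
    rfl
  rw [step1]
  -- Step 2: symmetrize the inner sum.
  have step2 : ∀ p : Fin g × Fin g,
      ∑ q ∈ Finset.univ.filter (fun p : Fin g × Fin g => p.1 ≤ p.2), F p q
        = (2 - if p.1 = p.2 then (1 : ℂ) else 0) * ∑ q, G p q := by
    intro p
    rw [Finset.mul_sum, ← sum_sym (fun q => (2 - if p.1 = p.2 then (1 : ℂ) else 0) * G p q)]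
    apply Finset.sum_congr rfl
    intro q _
    rcases q with ⟨c, d⟩
    simp only [hF, hG, Prod.swap_prod_mk]
    by_cases h : c = d <;> simp only [h, if_true, if_false] <;> ring
  -- Step 3: symmetrize the outer sum.
  have hGswap : ∀ p : Fin g × Fin g, (∑ q, G p.swap q) = ∑ q, G p q := by
    intro p
    rw [← Equiv.sum_comp (Equiv.prodComm (Fin g) (Fin g)) (G p)]
    apply Finset.sum_congr rfl
    intro q _
    rcases q with ⟨c, d⟩
    rcases p with ⟨a, b⟩
    simp only [hG, Prod.swap_prod_mk, Equiv.prodComm_apply]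
    ring
  have step3 : ∑ p ∈ Finset.univ.filter (fun p : Fin g × Fin g => p.1 ≤ p.2),
      ((2 - if p.1 = p.2 then (1 : ℂ) else 0) * ∑ q, G p q)
      = ∑ p, ∑ q, G p q := by
    rw [← sum_sym (fun p => ∑ q, G p q)]
    apply Finset.sum_congr rfl
    intro p _
    rw [hGswap p]
    by_cases h : p.1 = p.2
    · simp only [h, if_true]
      rw [eq_div_iff (by norm_num : (1 : ℂ) + 1 ≠ 0)]
      ring
    · simp only [h, if_false]
      rw [eq_div_iff (by norm_num : (1 : ℂ) + 0 ≠ 0)]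
      ring
  have e : ∑ x : Fin g × Fin g, u x.1 * C x.1 x.2 * w x.2
      = ∑ i, ∑ j, u i * C i j * w j :=
    Fintype.sum_prod_type (fun x : Fin g × Fin g => u x.1 * C x.1 x.2 * w x.2)
  calc (∑ i, ∑ j, u i * C i j * w j) ^ 2
      = (∑ i, ∑ j, u i * C i j * w j) * (∑ i, ∑ j, u i * C i j * w j) := sq _
    _ = ∑ p : Fin g × Fin g, ∑ q : Fin g × Fin g, G p q := by
        rw [← e, Finset.sum_mul_sum]
        simp only [hG, Fintype.sum_prod_type]
        apply Finset.sum_congr rfl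
        intro x1 _
        rw [Finset.sum_comm]
    _ = ∑ p ∈ Finset.univ.filter (fun p : Fin g × Fin g => p.1 ≤ p.2),
          ∑ q ∈ Finset.univ.filter (fun p : Fin g × Fin g => p.1 ≤ p.2), F p q := by
        rw [← step3]
        apply Finset.sum_congr rfl
        intro p _
        exact (step2 p).symm
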